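/- Let J be a finite index set and let B(q), q ∈ ℝ^J, be a diagonally monotone family of Hermitian operators on a finite-dimensional Hilbert space H of dimension m. Then for each k ∈ {1,…,m}, the k-th eigenvalue in nondecreasing order, q ↦ E_k^{B(q)}, is a diagonally monotone function on ℝ^J. -/

import Mathlib

open MeasureTheory ProbabilityTheory Matrix

noncomputable section

/-- The lattice `ℤ^d`. -/
abbrev Zd (d : ℕ) := Fin d → ℤ

/-- The torus `𝕋^ν = ℝ^ν/ℤ^ν` with the sup-distance. -/
abbrev Torus (ν : ℕ) := Fin ν → AddCircle (1 : ℝ)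

/-- The canonical representative of a point of `ℝ/ℤ` in `[0,1)`. -/
def torusRep (x : AddCircle (1 : ℝ)) : ℝ := (AddCircle.equivIco 1 0 x : ℝ)

/-- The index of the dyadic cube of the partition `𝒞_n` that contains `ω`:
`ω` belongs to `∏_j [i_j 2^{-n}, (i_j+1) 2^{-n})` iff `dyadicIdx n ω = i`. -/
def dyadicIdx {ν : ℕ} (n : ℕ) (ω : Torus ν) : Fin ν → ℕ :=
  fun j => (⌊torusRep (ω j) * 2 ^ n⌋).toNat

/-- The lattice cube of sidelength `2L+1` centred at `u ∈ ℤ^d`. -/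
def cube1 (d L : ℕ) (u : Zd d) : Finset (Zd d) :=
  Fintype.piFinset fun j => Finset.Icc (u j - L) (u j + L)

/-- The two-particle cube `Λ_L(u₁) × Λ_L(u₂) ⊂ ℤ^{2d}`. -/
def cube2 (d L : ℕ) (u : Zd d × Zd d) : Finset (Zd d × Zd d) :=
  cube1 d L u.1 ×ˢ cube1 d L u.2

/-- A single-particle cube of real radius `R` centred at `v` (as a set). -/
def cubeR (d : ℕ) (R : ℝ) (v : Zd d) : Set (Zd d) :=
  {x | ∀ j, |(x j : ℝ) - (v j : ℝ)| ≤ R}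

/-- The two-particle Hamiltonian `Δ₁ + Δ₂ + W(x₁) + W(x₂) + U(x₁,x₂)` restricted
(with Dirichlet boundary conditions) to a finite two-particle box `Λ`. -/
def ham2 {d : ℕ} (Λ : Finset (Zd d × Zd d)) (W : Zd d → ℝ) (U : Zd d → Zd d → ℝ) :
    Matrix Λ Λ ℝ := fun x y =>
  (if (∑ j, |x.1.1 j - y.1.1 j|) + (∑ j, |x.1.2 j - y.1.2 j|) = 1 then 1 else 0) +
  (if x = y then W x.1.1 + W x.1.2 + U x.1.1 x.1.2 else 0)

/-- The spectrum of the finite-volume two-particle Hamiltonian. -/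
def spec2 {d : ℕ} (Λ : Finset (Zd d × Zd d)) (W : Zd d → ℝ) (U : Zd d → Zd d → ℝ) : Set ℝ :=
  spectrum ℝ (ham2 Λ W U)

/-- The randelette potential `v(ω;θ) = ∑_{n≥1} a_n ∑_k θ_{n,k} φ_{n,k}(ω)`; since for a fixed
`n` exactly one indicator `φ_{n,k}(ω)` is nonzero, namely the one with `k = dyadicIdx n ω`,
the inner sum collapses. -/
def vpot {ν : ℕ} (a : ℕ → ℝ) (θv : ℕ → (Fin ν → ℕ) → ℝ) (ω : Torus ν) : ℝ :=
  ∑' n : ℕ, a (n + 1) * θv (n + 1) (dyadicIdx (n + 1) ω)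

/-- A function `Φ : ℝ^J → ℝ` is diagonally monotone (DM). -/
def DiagMonotone {J : Type*} [Fintype J] (Φ : (J → ℝ) → ℝ) : Prop :=
  (∀ q r : J → ℝ, (∀ j, 0 ≤ r j) → Φ q ≤ Φ (q + r)) ∧
  (∀ (q : J → ℝ) (t : ℝ), 0 < t → Φ q + t ≤ Φ (q + fun _ => t))

/-- A family of Hermitian matrices `B(q)`, `q ∈ ℝ^J`, is diagonally monotone. -/
def DiagMonotoneOp {J n : Type*} [Fintype J] [Fintype n] [DecidableEq n]
    (B : (J → ℝ) → Matrix n n ℝ) : Prop :=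
  (∀ q r : J → ℝ, (∀ j, 0 ≤ r j) → (B (q + r) - B q).PosSemidef) ∧
  (∀ f : n → ℝ, f ⬝ᵥ f = 1 → DiagMonotone fun q => f ⬝ᵥ (B q).mulVec f)

/-- `s(μ, ε) = sup_a μ([a, a+ε])`. -/
def sConc (μ : Measure ℝ) (ε : ℝ) : ENNReal := ⨆ a : ℝ, μ (Set.Icc a (a + ε))



section AuxEig
variable {m : ℕ}

private lemma toEuclideanLin_eigen {A : Matrix (Fin m) (Fin m) ℝ} (hA : A.IsHermitian) (j : Fin m) :
    toEuclideanLin A (hA.eigenvectorBasis j) = hA.eigenvalues j • hA.eigenvectorBasis j := by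
  apply (WithLp.equiv 2 (Fin m → ℝ)).injective
  ext i
  simpa [toEuclideanLin_apply] using congrFun (hA.mulVec_eigenvectorBasis j) i

/-- Quadratic form in eigencoordinates. -/
private lemma quadform_eq {A : Matrix (Fin m) (Fin m) ℝ} (hA : A.IsHermitian)
    (y : EuclideanSpace ℝ (Fin m)) :
    (inner ℝ (toEuclideanLin A y) y : ℝ)
      = ∑ i, hA.eigenvalues i * (inner ℝ (hA.eigenvectorBasis i) y : ℝ) ^ 2 := by
  have hsym : (toEuclideanLin A).IsSymmetric := isHermitian_iff_isSymmetric.1 hA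
  rw [← hA.eigenvectorBasis.sum_inner_mul_inner (toEuclideanLin A y) y]
  refine Finset.sum_congr rfl fun i _ => ?_
  have h1 : (inner ℝ (toEuclideanLin A y) (hA.eigenvectorBasis i) : ℝ)
      = hA.eigenvalues i * inner ℝ (hA.eigenvectorBasis i) y := by
    rw [hsym y (hA.eigenvectorBasis i), toEuclideanLin_eigen hA i, inner_smul_right,
      real_inner_comm]
  rw [h1]; ring

private lemma normsq_eq {A : Matrix (Fin m) (Fin m) ℝ} (hA : A.IsHermitian)
    (y : EuclideanSpace ℝ (Fin m)) :
    (inner ℝ y y : ℝ) = ∑ i, (inner ℝ (hA.eigenvectorBasis i) y : ℝ) ^ 2 := by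
  rw [← hA.eigenvectorBasis.sum_inner_mul_inner y y]
  refine Finset.sum_congr rfl fun i _ => ?_
  rw [real_inner_comm y]; ring

/-- coefficient vanishing on spans of sub-families of the eigenbasis -/
private lemma coeff_vanish {A : Matrix (Fin m) (Fin m) ℝ} (hA : A.IsHermitian)
    {S : Finset (Fin m)} {y : EuclideanSpace ℝ (Fin m)}
    (hy : y ∈ Submodule.span ℝ (hA.eigenvectorBasis '' (S : Set (Fin m))))
    {i : Fin m} (hi : i ∉ S) : (inner ℝ (hA.eigenvectorBasis i) y : ℝ) = 0 := by
  classical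
  have := (Module.Basis.mem_span_image (b := hA.eigenvectorBasis.toBasis)).1
    (by simpa [OrthonormalBasis.coe_toBasis] using hy)
  have h0 : hA.eigenvectorBasis.toBasis.repr y i = 0 := by
    by_contra h
    exact hi (this (Finsupp.mem_support_iff.2 h))
  rw [← hA.eigenvectorBasis.repr_apply_apply]
  simpa [OrthonormalBasis.coe_toBasis_repr_apply] using h0

private lemma finrank_span_image {A : Matrix (Fin m) (Fin m) ℝ} (hA : A.IsHermitian)
    (S : Finset (Fin m)) :
    Module.finrank ℝ (Submodule.span ℝ (hA.eigenvectorBasis '' (S : Set (Fin m)))) = S.card := by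
  classical
  have h1 : hA.eigenvectorBasis '' (S : Set (Fin m))
      = Set.range (fun j : S => hA.eigenvectorBasis j) := by
    exact Set.image_eq_range _ _
  have hli : LinearIndependent ℝ (fun j : {x // x ∈ S} => hA.eigenvectorBasis ↑j) :=
    (hA.eigenvectorBasis.orthonormal.linearIndependent).comp _ Subtype.val_injective
  have h2 := finrank_span_eq_card hli
  rw [h1]
  simpa [Function.comp_def] using h2

/-- Weyl-type monotonicity with a shift. -/
private lemma sortedEig_shift_le {A B : Matrix (Fin m) (Fin m) ℝ}
    (hA : A.IsHermitian) (hB : B.IsHermitian) (c : ℝ)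
    (h : ∀ x : Fin m → ℝ, x ⬝ᵥ (A *ᵥ x) + c * (x ⬝ᵥ x) ≤ x ⬝ᵥ (B *ᵥ x)) (k : Fin m) :
    hA.eigenvalues (Tuple.sort hA.eigenvalues k) + c
      ≤ hB.eigenvalues (Tuple.sort hB.eigenvalues k) := by
  classical
  set σA := Tuple.sort hA.eigenvalues with hσA
  set σB := Tuple.sort hB.eigenvalues with hσB
  set SA : Finset (Fin m) := (Finset.Ici k).image σA with hSA
  set SB : Finset (Fin m) := (Finset.Iic k).image σB with hSB
  set W : Submodule ℝ (EuclideanSpace ℝ (Fin m)) :=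
    Submodule.span ℝ (hA.eigenvectorBasis '' (SA : Set (Fin m))) with hW
  set V : Submodule ℝ (EuclideanSpace ℝ (Fin m)) :=
    Submodule.span ℝ (hB.eigenvectorBasis '' (SB : Set (Fin m))) with hV
  have hcardA : SA.card = m - k := by
    rw [hSA, Finset.card_image_of_injective _ σA.injective, Fin.card_Ici]
  have hcardB : SB.card = k + 1 := by
    rw [hSB, Finset.card_image_of_injective _ σB.injective, Fin.card_Iic]
  have hrW : Module.finrank ℝ W = m - k := by rw [hW, finrank_span_image hA, hcardA]
  have hrV : Module.finrank ℝ V = k + 1 := by rw [hV, finrank_span_image hB, hcardB]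
  -- nontrivial intersection
  have hsum := Submodule.finrank_sup_add_finrank_inf_eq V W
  have hle : Module.finrank ℝ ↥(V ⊔ W) ≤ m := by
    simpa [finrank_euclideanSpace_fin] using Submodule.finrank_le (V ⊔ W)
  have hpos : 0 < Module.finrank ℝ ↥(V ⊓ W) := by
    have hk : (k : ℕ) < m := k.isLt
    omega
  obtain ⟨⟨y, hyVW⟩, hy0'⟩ := Module.finrank_pos_iff_exists_ne_zero.1 hpos
  have hy0 : y ≠ 0 := by
    intro h0; apply hy0'; exact Subtype.ext h0
  obtain ⟨hyV, hyW⟩ := Submodule.mem_inf.1 hyVW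
  have hinnerpos : (0 : ℝ) < inner ℝ y y :=
    lt_of_le_of_ne real_inner_self_nonneg
      (fun h0 => hy0 ((@inner_self_eq_zero ℝ _ _ _ _ y).1 h0.symm))
  -- lower bound on A side
  have hAlow : hA.eigenvalues (σA k) * (inner ℝ y y : ℝ) ≤ inner ℝ (toEuclideanLin A y) y := by
    rw [quadform_eq hA, normsq_eq hA, Finset.mul_sum]
    refine Finset.sum_le_sum fun i _ => ?_
    by_cases hi : i ∈ SA
    · obtain ⟨j, hj, rfl⟩ := Finset.mem_image.1 hi
      have : hA.eigenvalues (σA k) ≤ hA.eigenvalues (σA j) :=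
        Tuple.monotone_sort hA.eigenvalues (Finset.mem_Ici.1 hj)
      exact mul_le_mul_of_nonneg_right this (sq_nonneg _)
    · rw [coeff_vanish hA hyW hi]; simp
  -- upper bound on B side
  have hBhigh : (inner ℝ (toEuclideanLin B y) y : ℝ) ≤ hB.eigenvalues (σB k) * inner ℝ y y := by
    rw [quadform_eq hB, normsq_eq hB, Finset.mul_sum]
    refine Finset.sum_le_sum fun i _ => ?_
    by_cases hi : i ∈ SB
    · obtain ⟨j, hj, rfl⟩ := Finset.mem_image.1 hi
      have : hB.eigenvalues (σB j) ≤ hB.eigenvalues (σB k) :=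
        Tuple.monotone_sort hB.eigenvalues (Finset.mem_Iic.1 hj)
      exact mul_le_mul_of_nonneg_right this (sq_nonneg _)
    · rw [coeff_vanish hB hyV hi]; simp
  -- bridge to dot products and conclude
  have hbridgeA : (inner ℝ (toEuclideanLin A y) y : ℝ)
      = (WithLp.equiv 2 (Fin m → ℝ) y) ⬝ᵥ (A *ᵥ (WithLp.equiv 2 (Fin m → ℝ) y)) := by
    simp [PiLp.inner_apply, toEuclideanLin_apply, dotProduct, mul_comm]
  have hbridgeB : (inner ℝ (toEuclideanLin B y) y : ℝ)
      = (WithLp.equiv 2 (Fin m → ℝ) y) ⬝ᵥ (B *ᵥ (WithLp.equiv 2 (Fin m → ℝ) y)) := by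
    simp [PiLp.inner_apply, toEuclideanLin_apply, dotProduct, mul_comm]
  have hbridgeN : (inner ℝ y y : ℝ)
      = (WithLp.equiv 2 (Fin m → ℝ) y) ⬝ᵥ (WithLp.equiv 2 (Fin m → ℝ) y) := by
    rw [PiLp.inner_apply]; simp [dotProduct, pow_two]
  have hmid : (inner ℝ (toEuclideanLin A y) y : ℝ) + c * inner ℝ y y ≤ inner ℝ (toEuclideanLin B y) y := by
    rw [hbridgeA, hbridgeB, hbridgeN]; exact h _
  have final : (hA.eigenvalues (σA k) + c) * (inner ℝ y y : ℝ)
      ≤ hB.eigenvalues (σB k) * inner ℝ y y := by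
    have := hAlow.trans (by linarith [hmid, hBhigh] : (inner ℝ (toEuclideanLin A y) y : ℝ)
      ≤ hB.eigenvalues (σB k) * inner ℝ y y - c * inner ℝ y y)
    linarith [this]
  have := le_of_mul_le_mul_right (by linarith [final] :
    (hA.eigenvalues (σA k) + c) * (inner ℝ y y : ℝ) ≤ hB.eigenvalues (σB k) * inner ℝ y y) hinnerpos
  linarith

end AuxEig

/-- For a diagonally monotone family of Hermitian operators on an `m`-dimensional
Hilbert space, each eigenvalue (in nondecreasing order) is a diagonally monotone
function of the parameter `q ∈ ℝ^J`. -/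
theorem eigenvalue_diagMonotone {J : Type*} [Fintype J] {m : ℕ}
    (B : (J → ℝ) → Matrix (Fin m) (Fin m) ℝ)
    (hherm : ∀ q, (B q).IsHermitian) (hDM : DiagMonotoneOp B) (k : Fin m) :
    DiagMonotone fun q =>
      (hherm q).eigenvalues (Tuple.sort (hherm q).eigenvalues k) := by
  constructor
  · intro q r hr
    have hps := (hDM.1 q r hr).2
    have h : ∀ x : Fin m → ℝ,
        x ⬝ᵥ (B q *ᵥ x) + 0 * (x ⬝ᵥ x) ≤ x ⬝ᵥ (B (q + r) *ᵥ x) := by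
      intro x
      have := (hDM.1 q r hr).dotProduct_mulVec_nonneg x
      rw [star_trivial, Matrix.sub_mulVec, dotProduct_sub] at this
      linarith
    simpa using sortedEig_shift_le (hherm q) (hherm (q + r)) 0 h k
  · intro q t ht
    have h : ∀ x : Fin m → ℝ,
        x ⬝ᵥ (B q *ᵥ x) + t * (x ⬝ᵥ x) ≤ x ⬝ᵥ (B (q + fun _ => t) *ᵥ x) := by
      intro x
      by_cases hx : x = 0
      · simp [hx]
      · have hxx : (0 : ℝ) < x ⬝ᵥ x :=
          lt_of_le_of_ne (Finset.sum_nonneg fun i _ => mul_self_nonneg _)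
            (fun h0 => hx (dotProduct_self_eq_zero.1 h0.symm))
        set s : ℝ := Real.sqrt (x ⬝ᵥ x) with hs
        have hspos : 0 < s := Real.sqrt_pos.2 hxx
        have hss : s * s = x ⬝ᵥ x := Real.mul_self_sqrt hxx.le
        set f : Fin m → ℝ := s⁻¹ • x with hf
        have hf1 : f ⬝ᵥ f = 1 := by
          rw [hf, smul_dotProduct, dotProduct_smul, smul_eq_mul, smul_eq_mul, ← hss]
          field_simp
        have key := ((hDM.2 f hf1).2 q t ht)
        dsimp only at key
        have e1 : ∀ M : Matrix (Fin m) (Fin m) ℝ,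
            f ⬝ᵥ (M *ᵥ f) = s⁻¹ * (s⁻¹ * (x ⬝ᵥ (M *ᵥ x))) := by
          intro M
          rw [hf, smul_dotProduct, Matrix.mulVec_smul, dotProduct_smul, smul_eq_mul, smul_eq_mul]
        rw [e1, e1] at key
        have h2 := mul_le_mul_of_nonneg_left key (mul_pos hspos hspos).le
        have hsne : s ≠ 0 := hspos.ne'
        rw [mul_add] at h2
        have e2 : ∀ a : ℝ, s * s * (s⁻¹ * (s⁻¹ * a)) = a := by
          intro a; field_simp
        rw [e2, e2, hss] at h2
        linarith [h2]
    simpa using sortedEig_shift_le (hherm q) (hherm (q + fun _ => t)) t h k
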